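/- Suppose the monopolist does not fully bunch, i.e. b(q^M) > 0. Then the non-discriminating monopolist's optimal quality satisfies q_N^M < q^M, and the cutoff type satisfies b_N(q_N^M) < b(q^M). -/

import Mathlib

open MeasureTheory Set Filter Topology

noncomputable section

/-- The virtual value `φ(θ) = θ - (1 - F(θ))/F'(θ)`. -/
def phi (F : ℝ → ℝ) (θ : ℝ) : ℝ := θ - (1 - F θ) / deriv F θ

/-- Standing hypotheses of the main model. -/
structure MainModel (F g c : ℝ → ℝ) : Prop where
  F_smooth : ContDiff ℝ 2 F
  F_zero : F 0 = 0
  F_one : F 1 = 1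
  F_mono : Monotone F
  F_density_pos : ∀ θ ∈ Icc (0:ℝ) 1, 0 < deriv F θ
  phi_mono : StrictMonoOn (phi F) (Icc (0:ℝ) 1)
  g_zero : g 0 = 0
  g_mono : StrictMonoOn g (Ici (0:ℝ))
  g_concave : StrictConcaveOn ℝ (Ici (0:ℝ)) g
  g_diff : ∀ q ∈ Ioi (0:ℝ), DifferentiableAt ℝ g q
  g_diff2 : ∀ q ∈ Ioi (0:ℝ), DifferentiableAt ℝ (deriv g) q
  c_nonneg : ∀ q : ℝ, 0 ≤ c q
  c_mono : StrictMonoOn c (Ici (0:ℝ))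
  c_convex : StrictConvexOn ℝ (Ici (0:ℝ)) c
  c_diff : ∀ q ∈ Ici (0:ℝ), DifferentiableAt ℝ c q
  inada_gtop : Tendsto (deriv g) atTop (nhds 0)
  inada_czero : deriv c 0 = 0
  inada_ctop : Tendsto (deriv c) atTop atTop
  inada_gzero : Tendsto (deriv g) (nhdsWithin 0 (Ioi 0)) atTop

/-- An allocation: a measurable map from types to (nonnegative) qualities. -/
def IsAllocation (q : ℝ → ℝ) : Prop :=
  Measurable q ∧ ∀ θ ∈ Icc (0:ℝ) 1, 0 ≤ q θ

/-- Total welfare of an allocation. -/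
def totalWelfare (F g c : ℝ → ℝ) (q : ℝ → ℝ) : ℝ :=
  (∫ θ in (0:ℝ)..1, (g (q θ) + θ * q θ) * deriv F θ) - c (sSup (q '' Icc (0:ℝ) 1))

/-- Efficiency: maximize total welfare among allocations. -/
def Efficient (F g c : ℝ → ℝ) (q : ℝ → ℝ) : Prop :=
  IsAllocation q ∧
    ∀ q' : ℝ → ℝ, IsAllocation q' → totalWelfare F g c q' ≤ totalWelfare F g c q

/-- Incentive compatibility and individual rationality of a direct mechanism. -/
def ICIR (g : ℝ → ℝ) (q t : ℝ → ℝ) : Prop :=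
  ∀ θ ∈ Icc (0:ℝ) 1,
    (∀ θ' ∈ Icc (0:ℝ) 1, g (q θ') + θ * q θ' - t θ' ≤ g (q θ) + θ * q θ - t θ) ∧
      0 ≤ g (q θ) + θ * q θ - t θ

/-- The profit of the seller from a mechanism. -/
def profit (F c : ℝ → ℝ) (q t : ℝ → ℝ) : ℝ :=
  (∫ θ in (0:ℝ)..1, t θ * deriv F θ) - c (sSup (q '' Icc (0:ℝ) 1))

/-- A monopolist allocation: part of a profit-maximizing IC-IR mechanism. -/
def Monopolist (F g c : ℝ → ℝ) (q : ℝ → ℝ) : Prop :=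
  ∃ t : ℝ → ℝ, IsAllocation q ∧ ICIR g q t ∧
    ∀ q' t' : ℝ → ℝ, IsAllocation q' → ICIR g q' t' →
      profit F c q' t' ≤ profit F c q t

/-- The virtual surplus of an allocation. -/
def virtSurplus (F g : ℝ → ℝ) (q : ℝ → ℝ) : ℝ :=
  ∫ θ in (0:ℝ)..1, (g (q θ) + phi F θ * q θ) * deriv F θ

/-- Feasibility in the cap-constrained problem `𝒫(qcap)`. -/
def FeasibleCap (qcap : ℝ) (q : ℝ → ℝ) : Prop :=
  IsAllocation q ∧ MonotoneOn q (Icc (0:ℝ) 1) ∧ ∀ θ ∈ Icc (0:ℝ) 1, q θ ≤ qcap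

/-- The value `V(qcap)` of the cap-constrained problem `𝒫(qcap)`. -/
def Vval (F g : ℝ → ℝ) (qcap : ℝ) : ℝ :=
  sSup {v | ∃ q : ℝ → ℝ, FeasibleCap qcap q ∧ v = virtSurplus F g q}

/-- Solving the cap-constrained problem `𝒫(qcap)`. -/
def SolvesCap (F g : ℝ → ℝ) (qcap : ℝ) (q : ℝ → ℝ) : Prop :=
  FeasibleCap qcap q ∧
    ∀ q' : ℝ → ℝ, FeasibleCap qcap q' → virtSurplus F g q' ≤ virtSurplus F g q

/-- The virtual-surplus maximizer `β`, taking the value `⊤` where `φ(θ) ≥ 0`. -/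
def IsVSMax (F g : ℝ → ℝ) (βe : ℝ → EReal) : Prop :=
  ∀ θ ∈ Icc (0:ℝ) 1,
    (0 ≤ phi F θ → βe θ = ⊤) ∧
    (phi F θ < 0 → ∃ qb : ℝ, βe θ = (qb : EReal) ∧ 0 ≤ qb ∧
      ∀ q' : ℝ, 0 ≤ q' → g q' + phi F θ * q' ≤ g qb + phi F θ * qb)

/-- The generalized inverse `b` of the virtual-surplus maximizer. -/
def bfun (βe : ℝ → EReal) (q : ℝ) : ℝ :=
  sInf {θ ∈ Icc (0:ℝ) 1 | (q : EReal) ≤ βe θ}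

/-- The cutoff type of the non-discriminating monopolist. -/
def bN (F g : ℝ → ℝ) (q : ℝ) : ℝ :=
  sInf {θ ∈ Icc (0:ℝ) 1 | 0 ≤ g q + phi F θ * q}

/-- The revenue of the non-discriminating monopolist from quality `q`. -/
def VN (F g : ℝ → ℝ) (q : ℝ) : ℝ :=
  sSup {v | ∃ θ ∈ Icc (0:ℝ) 1, v = (1 - F θ) * (g q + θ * q)}


section AuxStmt5

variable {F g c : ℝ → ℝ} {βe : ℝ → EReal}

lemma aux_F_diff (hM : MainModel F g c) : Differentiable ℝ F := by
  have h : ContDiff ℝ (1 + 1 : WithTop ℕ∞) F := by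
    rw [one_add_one_eq_two]; exact hM.F_smooth
  exact (contDiff_succ_iff_deriv.mp h).1

lemma aux_D_cont (hM : MainModel F g c) : Continuous (deriv F) := by
  have h : ContDiff ℝ (1 + 1 : WithTop ℕ∞) F := by
    rw [one_add_one_eq_two]; exact hM.F_smooth
  exact (contDiff_succ_iff_deriv.mp h).2.2.continuous

lemma aux_phi_contOn (hM : MainModel F g c) : ContinuousOn (phi F) (Icc (0:ℝ) 1) := by
  unfold phi
  apply ContinuousOn.sub continuousOn_id
  exact ContinuousOn.div
    (continuousOn_const.sub (aux_F_diff hM).continuous.continuousOn)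
    (aux_D_cont hM).continuousOn
    (fun θ hθ => (hM.F_density_pos θ hθ).ne')

lemma aux_phi_one (hM : MainModel F g c) : phi F 1 = 1 := by
  simp [phi, hM.F_one]

lemma aux_gd_pos (hM : MainModel F g c) {x : ℝ} (hx : 0 < x) : 0 < deriv g x := by
  have h1 : slope g x (x + 1) ≤ deriv g x :=
    hM.g_concave.concaveOn.slope_le_deriv (le_of_lt hx) (by simp; linarith)
      (by linarith) (hM.g_diff x hx)
  have h2 : 0 < slope g x (x + 1) := by
    rw [slope_def_field]
    apply div_pos _ (by linarith)
    have := hM.g_mono (le_of_lt hx : x ∈ Ici (0:ℝ)) (by simp; linarith : x + 1 ∈ Ici (0:ℝ))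
      (by linarith)
    linarith
  linarith

/-- concavity: `g' y * (y - x) ≤ g y - g x` for `0 ≤ x < y`. -/
lemma aux_gd_le_chord (hM : MainModel F g c) {x y : ℝ} (hx : 0 ≤ x) (hxy : x < y) :
    deriv g y * (y - x) ≤ g y - g x := by
  have h := hM.g_concave.concaveOn.deriv_le_slope (hx : x ∈ Ici (0:ℝ))
    (by simp; linarith : y ∈ Ici (0:ℝ)) hxy (hM.g_diff y (by simp; linarith))
  rw [slope_def_field] at h
  have h0 : 0 < y - x := by linarith
  calc deriv g y * (y - x) ≤ (g y - g x) / (y - x) * (y - x) := by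
        apply mul_le_mul_of_nonneg_right h (le_of_lt h0)
    _ = g y - g x := by field_simp

/-- concavity: `g y - g x ≤ g' x * (y - x)` for `0 < x < y`. -/
lemma aux_chord_le_gd (hM : MainModel F g c) {x y : ℝ} (hx : 0 < x) (hxy : x < y) :
    g y - g x ≤ deriv g x * (y - x) := by
  have h := hM.g_concave.concaveOn.slope_le_deriv (le_of_lt hx : x ∈ Ici (0:ℝ))
    (by simp; linarith : y ∈ Ici (0:ℝ)) hxy (hM.g_diff x hx)
  rw [slope_def_field] at h
  have h0 : 0 < y - x := by linarith
  calc g y - g x = (g y - g x) / (y - x) * (y - x) := by field_simp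
    _ ≤ deriv g x * (y - x) := mul_le_mul_of_nonneg_right h (le_of_lt h0)

/-- strict concavity: `g' y * y < g y` for `y > 0`. -/
lemma aux_gd_lt_avg (hM : MainModel F g c) {y : ℝ} (hy : 0 < y) :
    deriv g y * y < g y := by
  have h := hM.g_concave.deriv_lt_slope (le_refl (0:ℝ) : (0:ℝ) ∈ Ici (0:ℝ))
    (le_of_lt hy : y ∈ Ici (0:ℝ)) hy (hM.g_diff y hy)
  rw [slope_def_field, hM.g_zero] at h
  have h2 : deriv g y < g y / y := by simpa using h
  exact (lt_div_iff₀ hy).mp h2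

lemma aux_gd_anti (hM : MainModel F g c) : StrictAntiOn (deriv g) (Ioi (0:ℝ)) := by
  have h : StrictConcaveOn ℝ (Ioi (0:ℝ)) g :=
    hM.g_concave.subset Ioi_subset_Ici_self (convex_Ioi 0)
  exact h.strictAntiOn_deriv hM.g_diff

lemma aux_key_integral (hM : MainModel F g c) (A B : ℝ) {s : ℝ} (hs : s ∈ Icc (0:ℝ) 1) :
    ∫ θ in s..(1:ℝ), (A + B * phi F θ) * deriv F θ = (1 - F s) * (A + s * B) := by
  have hsub : Icc s 1 ⊆ Icc (0:ℝ) 1 := Icc_subset_Icc hs.1 le_rfl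
  have hder : ∀ θ ∈ uIcc s 1, HasDerivAt (fun t => -((1 - F t) * (A + t * B)))
      ((A + B * phi F θ) * deriv F θ) θ := by
    intro θ hθ
    rw [uIcc_of_le hs.2] at hθ
    have hθ01 : θ ∈ Icc (0:ℝ) 1 := hsub hθ
    have h1 : HasDerivAt (fun t => 1 - F t) (-(deriv F θ)) θ := by
      simpa using ((aux_F_diff hM θ).hasDerivAt.const_sub 1)
    have h2 : HasDerivAt (fun t : ℝ => A + t * B) B θ := by
      simpa using ((hasDerivAt_id θ).mul_const B).const_add A
    have h3 := (h1.mul h2).neg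
    refine h3.congr_deriv ?_
    have hD0 : deriv F θ ≠ 0 := (hM.F_density_pos θ hθ01).ne'
    unfold phi
    field_simp
    ring
  have hint : IntervalIntegrable (fun θ => (A + B * phi F θ) * deriv F θ)
      MeasureTheory.volume s 1 := by
    apply ContinuousOn.intervalIntegrable
    rw [uIcc_of_le hs.2]
    exact ((continuousOn_const.add
      (continuousOn_const.mul ((aux_phi_contOn hM).mono hsub))).mul
      (aux_D_cont hM).continuousOn)
  have hres := intervalIntegral.integral_eq_sub_of_hasDerivAt hder hint
  rw [hres, hM.F_one]
  ring

lemma aux_g_nonneg (hM : MainModel F g c) {x : ℝ} (hx : 0 ≤ x) : 0 ≤ g x := by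
  have := hM.g_mono.monotoneOn (self_mem_Ici) (hx : x ∈ Ici (0:ℝ)) hx
  rwa [hM.g_zero] at this

lemma aux_ptbound (hM : MainModel F g c) {qc : ℝ} (hqc : 0 ≤ qc) :
    ∃ C : ℝ, 0 ≤ C ∧ ∀ x θ : ℝ, θ ∈ Icc (0:ℝ) 1 → 0 ≤ x → x ≤ qc →
      ‖(g x + phi F θ * x) * deriv F θ‖ ≤ C := by
  obtain ⟨Cphi, hCphi⟩ := isCompact_Icc.exists_bound_of_continuousOn (aux_phi_contOn hM)
  obtain ⟨CD, hCD⟩ := isCompact_Icc.exists_bound_of_continuousOn (aux_D_cont hM).continuousOn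
  have hCphi0 : 0 ≤ Cphi := le_trans (norm_nonneg _) (hCphi 0 ⟨le_rfl, zero_le_one⟩)
  have hCD0 : 0 ≤ CD := le_trans (norm_nonneg _) (hCD 0 ⟨le_rfl, zero_le_one⟩)
  have hgc : 0 ≤ g qc := aux_g_nonneg hM hqc
  refine ⟨(g qc + Cphi * qc) * CD, by positivity, fun x θ hθ hx hxc => ?_⟩
  rw [Real.norm_eq_abs, abs_mul]
  have hg1 : 0 ≤ g x := aux_g_nonneg hM hx
  have hg2 : g x ≤ g qc := by
    rcases eq_or_lt_of_le hxc with he | hlt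
    · rw [he]
    · exact le_of_lt (hM.g_mono hx hqc hlt)
  have hb : |phi F θ * x| ≤ Cphi * qc := by
    rw [abs_mul]
    apply mul_le_mul _ (by rwa [abs_of_nonneg hx]) (abs_nonneg _) hCphi0
    simpa [Real.norm_eq_abs] using hCphi θ hθ
  have h1 : |g x + phi F θ * x| ≤ g qc + Cphi * qc := by
    calc |g x + phi F θ * x| ≤ |g x| + |phi F θ * x| := abs_add_le _ _
      _ ≤ g qc + Cphi * qc := by rw [abs_of_nonneg hg1]; linarith
  have h2 : |deriv F θ| ≤ CD := by simpa [Real.norm_eq_abs] using hCD θ hθ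
  exact mul_le_mul h1 h2 (abs_nonneg _) (by positivity)

lemma aux_alloc_integrable (hM : MainModel F g c) {q : ℝ → ℝ} {qc : ℝ}
    (hfeas : FeasibleCap qc q) (hqc : 0 ≤ qc) :
    IntervalIntegrable (fun θ => (g (q θ) + phi F θ * q θ) * deriv F θ)
      MeasureTheory.volume 0 1 := by
  obtain ⟨⟨hmeas, h0⟩, hmono, hcap⟩ := hfeas
  obtain ⟨C, hC0, hC⟩ := aux_ptbound hM hqc
  rw [intervalIntegrable_iff_integrableOn_Ioc_of_le zero_le_one]
  have hgmono : Monotone (fun x => g (max x 0)) := by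
    intro a b hab
    exact hM.g_mono.monotoneOn (le_max_right a 0) (le_max_right b 0) (max_le_max hab le_rfl)
  have hφmeas : Measurable (phi F) := by
    unfold phi
    exact measurable_id.sub ((measurable_const.sub
      (aux_F_diff hM).continuous.measurable).div (aux_D_cont hM).measurable)
  have hmeas2 : Measurable fun θ => (g (max (q θ) 0) + phi F θ * q θ) * deriv F θ :=
    ((hgmono.measurable.comp hmeas).add (hφmeas.mul hmeas)).mul
      (aux_D_cont hM).measurable
  have hInt2 : MeasureTheory.IntegrableOn
      (fun θ => (g (max (q θ) 0) + phi F θ * q θ) * deriv F θ) (Ioc (0:ℝ) 1) := by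
    apply MeasureTheory.Integrable.mono' (MeasureTheory.integrable_const C)
      hmeas2.aestronglyMeasurable
    rw [MeasureTheory.ae_restrict_iff' measurableSet_Ioc]
    apply MeasureTheory.ae_of_all
    intro θ hθ
    have hθ' : θ ∈ Icc (0:ℝ) 1 := Ioc_subset_Icc_self hθ
    have hq0 := h0 θ hθ'
    rw [max_eq_left hq0]
    exact hC (q θ) θ hθ' hq0 (hcap θ hθ')
  apply hInt2.congr_fun _ measurableSet_Ioc
  intro θ hθ
  simp [max_eq_left (h0 θ (Ioc_subset_Icc_self hθ))]

lemma aux_zero_feasible {qc : ℝ} (hqc : 0 ≤ qc) : FeasibleCap qc (fun _ => 0) :=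
  ⟨⟨measurable_const, fun _ _ => le_rfl⟩, fun _ _ _ _ _ => le_rfl, fun _ _ => hqc⟩

lemma aux_virtSurplus_zero (hM : MainModel F g c) : virtSurplus F g (fun _ => 0) = 0 := by
  simp [virtSurplus, hM.g_zero]

lemma aux_Vset_bddAbove (hM : MainModel F g c) {qc : ℝ} (hqc : 0 ≤ qc) :
    BddAbove {v | ∃ q : ℝ → ℝ, FeasibleCap qc q ∧ v = virtSurplus F g q} := by
  obtain ⟨C, hC0, hC⟩ := aux_ptbound hM hqc
  refine ⟨C, ?_⟩
  rintro v ⟨q, ⟨⟨hmeas, h0⟩, hmono, hcap⟩, rfl⟩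
  have hb : ‖∫ θ in (0:ℝ)..1, (g (q θ) + phi F θ * q θ) * deriv F θ‖ ≤ C * |1 - 0| := by
    apply intervalIntegral.norm_integral_le_of_norm_le_const
    intro θ hθ
    rw [uIoc_of_le zero_le_one] at hθ
    have hθ' : θ ∈ Icc (0:ℝ) 1 := Ioc_subset_Icc_self hθ
    exact hC (q θ) θ hθ' (h0 θ hθ') (hcap θ hθ')
  have : ‖virtSurplus F g q‖ ≤ C := by simpa [virtSurplus] using hb
  exact le_trans (le_abs_self _) this

lemma aux_VN_max (hM : MainModel F g c) (q : ℝ) :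
    ∃ θ2 ∈ Icc (0:ℝ) 1, VN F g q = (1 - F θ2) * (g q + θ2 * q) ∧
      ∀ θ ∈ Icc (0:ℝ) 1, (1 - F θ) * (g q + θ * q) ≤ (1 - F θ2) * (g q + θ2 * q) := by
  have hcont : ContinuousOn (fun θ => (1 - F θ) * (g q + θ * q)) (Icc (0:ℝ) 1) :=
    ((continuous_const.sub (aux_F_diff hM).continuous).mul
      (continuous_const.add (continuous_id.mul continuous_const))).continuousOn
  obtain ⟨θ2, hθ2, hmax⟩ := isCompact_Icc.exists_isMaxOn (nonempty_Icc.mpr zero_le_one) hcont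
  have hmax' : ∀ θ ∈ Icc (0:ℝ) 1, (1 - F θ) * (g q + θ * q) ≤ (1 - F θ2) * (g q + θ2 * q) :=
    fun θ hθ => hmax hθ
  refine ⟨θ2, hθ2, ?_, hmax'⟩
  unfold VN
  apply le_antisymm
  · refine csSup_le ⟨(1 - F 0) * (g q + 0 * q), 0, ⟨le_rfl, zero_le_one⟩, rfl⟩ ?_
    rintro v ⟨θ, hθ, rfl⟩
    exact hmax' θ hθ
  · refine le_csSup ⟨(1 - F θ2) * (g q + θ2 * q), ?_⟩ ⟨θ2, hθ2, rfl⟩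
    rintro v ⟨θ, hθ, rfl⟩
    exact hmax' θ hθ

lemma aux_VN_ge (hM : MainModel F g c) (q : ℝ) {θ : ℝ} (hθ : θ ∈ Icc (0:ℝ) 1) :
    (1 - F θ) * (g q + θ * q) ≤ VN F g q := by
  obtain ⟨θ2, hθ2, he, hmax⟩ := aux_VN_max hM q
  rw [he]
  exact hmax θ hθ

lemma aux_bN_mem (hM : MainModel F g c) {q : ℝ} (hq : 0 ≤ q) :
    bN F g q ∈ {θ ∈ Icc (0:ℝ) 1 | 0 ≤ g q + phi F θ * q} := by
  have h1 : (1:ℝ) ∈ {θ ∈ Icc (0:ℝ) 1 | 0 ≤ g q + phi F θ * q} := by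
    refine ⟨⟨zero_le_one, le_rfl⟩, ?_⟩
    rw [aux_phi_one hM]
    have := aux_g_nonneg hM hq
    linarith
  apply IsClosed.csInf_mem
  · have he : {θ ∈ Icc (0:ℝ) 1 | 0 ≤ g q + phi F θ * q} =
        Icc (0:ℝ) 1 ∩ (fun θ => g q + phi F θ * q) ⁻¹' (Ici 0) := by
      ext θ; simp [mem_preimage, mem_Ici]
    rw [he]
    exact ContinuousOn.preimage_isClosed_of_isClosed
      (continuousOn_const.add ((aux_phi_contOn hM).mul continuousOn_const))
      isClosed_Icc isClosed_Ici
  · exact ⟨1, h1⟩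
  · exact ⟨0, fun θ hθ => hθ.1.1⟩

lemma aux_bN_mem_Icc (hM : MainModel F g c) {q : ℝ} (hq : 0 ≤ q) :
    bN F g q ∈ Icc (0:ℝ) 1 :=
  (aux_bN_mem hM hq).1

lemma aux_bN_cond (hM : MainModel F g c) {q : ℝ} (hq : 0 < q) (hb : 0 < bN F g q) :
    phi F (bN F g q) ≤ -(g q / q) := by
  have hbmem := aux_bN_mem hM hq.le
  have hb1 : bN F g q ≤ 1 := hbmem.1.2
  have hlt : ∀ θ ∈ Ico (0:ℝ) (bN F g q), g q + phi F θ * q < 0 := by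
    intro θ hθ
    by_contra hcon
    push_neg at hcon
    have : bN F g q ≤ θ := csInf_le ⟨0, fun x hx => hx.1.1⟩
      ⟨⟨hθ.1, hθ.2.le.trans hb1⟩, hcon⟩
    exact absurd this (not_le.mpr hθ.2)
  have hcw : ContinuousWithinAt (fun θ => g q + phi F θ * q) (Ico 0 (bN F g q)) (bN F g q) := by
    apply ContinuousWithinAt.mono _ (show Ico (0:ℝ) (bN F g q) ⊆ Icc 0 1 from
      fun x hx => ⟨hx.1, (hx.2.le).trans hb1⟩)
    exact (continuousWithinAt_const.add
      (((aux_phi_contOn hM) _ hbmem.1).mul continuousWithinAt_const))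
  have hne : (nhdsWithin (bN F g q) (Ico (0:ℝ) (bN F g q))).NeBot := by
    rw [← mem_closure_iff_nhdsWithin_neBot, closure_Ico (ne_of_lt hb)]
    exact ⟨hb.le, le_rfl⟩
  have hle : g q + phi F (bN F g q) * q ≤ 0 := by
    apply le_of_tendsto hcw
    exact eventually_nhdsWithin_of_forall (fun θ hθ => (hlt θ hθ).le)
  rw [← neg_div, le_div_iff₀ hq]
  linarith

lemma aux_bN_zero (hM : MainModel F g c) : bN F g 0 = 0 := by
  unfold bN
  have he : {θ ∈ Icc (0:ℝ) 1 | 0 ≤ g 0 + phi F θ * 0} = Icc (0:ℝ) 1 := by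
    ext θ; simp [hM.g_zero]
  rw [he, csInf_Icc zero_le_one]

lemma aux_bfun_one_mem (hM : MainModel F g c) (hβ : IsVSMax F g βe) (q : ℝ) :
    (1:ℝ) ∈ {θ ∈ Icc (0:ℝ) 1 | (q : EReal) ≤ βe θ} := by
  refine ⟨⟨zero_le_one, le_rfl⟩, ?_⟩
  rw [(hβ 1 ⟨zero_le_one, le_rfl⟩).1 (by rw [aux_phi_one hM]; exact zero_le_one)]
  exact le_top

lemma aux_bfun_mem_Icc (hM : MainModel F g c) (hβ : IsVSMax F g βe) (q : ℝ) :
    bfun βe q ∈ Icc (0:ℝ) 1 := by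
  constructor
  · exact le_csInf ⟨1, aux_bfun_one_mem hM hβ q⟩ (fun θ hθ => hθ.1.1)
  · exact csInf_le ⟨0, fun θ hθ => hθ.1.1⟩ (aux_bfun_one_mem hM hβ q)

lemma aux_bfun_zero (hM : MainModel F g c) (hβ : IsVSMax F g βe) : bfun βe 0 = 0 := by
  unfold bfun
  have he : {θ ∈ Icc (0:ℝ) 1 | ((0:ℝ) : EReal) ≤ βe θ} = Icc (0:ℝ) 1 := by
    ext θ
    simp only [mem_setOf_eq, and_iff_left_iff_imp]
    intro hθ
    rcases le_or_gt 0 (phi F θ) with h0 | h0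
    · rw [(hβ θ hθ).1 h0]; exact le_top
    · obtain ⟨qb, heq, hqb0, _⟩ := (hβ θ hθ).2 h0
      rw [heq]
      exact_mod_cast hqb0
  rw [he, csInf_Icc zero_le_one]

lemma aux_phi_ub (hM : MainModel F g c) (hβ : IsVSMax F g βe) {qM : ℝ} (hqM : 0 < qM)
    {θ : ℝ} (hθ : θ ∈ Icc (0:ℝ) 1) (hlt : θ < bfun βe qM) :
    phi F θ ≤ -(deriv g qM) := by
  have hnot : θ ∉ {θ ∈ Icc (0:ℝ) 1 | (qM : EReal) ≤ βe θ} := by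
    intro hmem
    exact absurd (csInf_le ⟨0, fun x hx => hx.1.1⟩ hmem) (not_le.mpr hlt)
  have hφneg : phi F θ < 0 := by
    by_contra hcon
    push_neg at hcon
    exact hnot ⟨hθ, by rw [(hβ θ hθ).1 hcon]; exact le_top⟩
  obtain ⟨qb, heq, hqb0, hmax⟩ := (hβ θ hθ).2 hφneg
  have hqblt : qb < qM := by
    by_contra hcon
    push_neg at hcon
    exact hnot ⟨hθ, by rw [heq]; exact_mod_cast hcon⟩
  have hineq := hmax qM hqM.le
  have hchord := aux_gd_le_chord hM hqb0 hqblt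
  by_contra hcon
  push_neg at hcon
  nlinarith [mul_lt_mul_of_pos_right (show -(deriv g qM) < phi F θ from hcon)
    (sub_pos.mpr hqblt)]

lemma aux_phi_lb (hM : MainModel F g c) (hβ : IsVSMax F g βe) {qM : ℝ} (hqM : 0 < qM)
    {θ : ℝ} (hθ : θ ∈ Icc (0:ℝ) 1) (hlt : bfun βe qM < θ) :
    -(deriv g qM) ≤ phi F θ := by
  rcases le_or_gt 0 (phi F θ) with h0 | hφneg
  · linarith [aux_gd_pos hM hqM]
  obtain ⟨qb, heq, hqb0, hmax⟩ := (hβ θ hθ).2 hφneg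
  have hqMqb : qM ≤ qb := by
    obtain ⟨θ'', hθ''mem, hθ''lt⟩ := exists_lt_of_csInf_lt
      ⟨1, aux_bfun_one_mem hM hβ qM⟩ hlt
    have hθ''Icc := hθ''mem.1
    have hφ'' : phi F θ'' < phi F θ := hM.phi_mono hθ''Icc hθ hθ''lt
    obtain ⟨qb'', heq'', hqb''0, hmax''⟩ := (hβ θ'' hθ''Icc).2 (hφ''.trans hφneg)
    have hqMr : qM ≤ qb'' := by
      have := hθ''mem.2
      rw [heq''] at this
      exact_mod_cast this
    have h1 := hmax qb'' hqb''0
    have h2 := hmax'' qb hqb0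
    nlinarith [hφ'']
  rcases eq_or_lt_of_le hqMqb with heq2 | hlt2
  · -- qb = qM : limit of slopes from the left
    by_contra hcon
    push_neg at hcon
    have ht : Tendsto (slope g qM) (nhdsWithin qM {x | x ≠ qM}) (nhds (deriv g qM)) :=
      hasDerivAt_iff_tendsto_slope.mp (hM.g_diff qM hqM).hasDerivAt
    have ht2 : Tendsto (slope g qM) (nhdsWithin qM (Ioo 0 qM)) (nhds (deriv g qM)) :=
      ht.mono_left (nhdsWithin_mono _ (fun x hx => ne_of_lt hx.2))
    have hne : (nhdsWithin qM (Ioo (0:ℝ) qM)).NeBot := by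
      rw [← mem_closure_iff_nhdsWithin_neBot, closure_Ioo (ne_of_lt hqM)]
      exact ⟨hqM.le, le_rfl⟩
    have hev : ∀ x ∈ Ioo (0:ℝ) qM, -(phi F θ) ≤ slope g qM x := by
      intro x hx
      have hmx := hmax x hx.1.le
      rw [← heq2] at hmx
      rw [slope_comm, slope_def_field, le_div_iff₀ (by linarith [hx.2] : (0:ℝ) < qM - x)]
      nlinarith [hmx]
    have := ge_of_tendsto ht2 (eventually_nhdsWithin_of_forall hev)
    linarith
  · have hineq := hmax qM hqM.le
    have hchord := aux_chord_le_gd hM hqM hlt2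
    by_contra hcon
    push_neg at hcon
    nlinarith [mul_lt_mul_of_pos_right
      (show deriv g qM < -(phi F θ) from by linarith) (sub_pos.mpr hlt2)]

lemma aux_lt_bfun (hM : MainModel F g c) (hβ : IsVSMax F g βe) {qM : ℝ} (hqM : 0 < qM)
    {x : ℝ} (hx : x ∈ Icc (0:ℝ) 1) (hφ : phi F x < -(deriv g qM)) :
    x < bfun βe qM := by
  by_contra hcon
  push_neg at hcon
  rcases eq_or_lt_of_le hcon with heq | hlt2
  · -- x = bfun βe qM : right limit
    have hgd := aux_gd_pos hM hqM
    have hx1 : x < 1 := by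
      rcases eq_or_lt_of_le hx.2 with h1 | h1
      · exfalso
        rw [h1, aux_phi_one hM] at hφ
        linarith
      · exact h1
    have hcw : ContinuousWithinAt (phi F) (Ioc x 1) x :=
      ((aux_phi_contOn hM) x hx).mono (fun y hy => ⟨le_trans hx.1 hy.1.le, hy.2⟩)
    have hne : (nhdsWithin x (Ioc x 1)).NeBot := by
      rw [← mem_closure_iff_nhdsWithin_neBot, closure_Ioc (ne_of_lt hx1)]
      exact ⟨le_rfl, hx1.le⟩
    have hev : ∀ θ ∈ Ioc x 1, -(deriv g qM) ≤ phi F θ := by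
      intro θ hθ
      apply aux_phi_lb hM hβ hqM ⟨le_trans hx.1 hθ.1.le, hθ.2⟩
      rw [heq]
      exact hθ.1
    have := ge_of_tendsto hcw (eventually_nhdsWithin_of_forall hev)
    linarith
  · exact absurd hφ (not_lt.mpr (aux_phi_lb hM hβ hqM hx hlt2))

lemma aux_V_gain (hM : MainModel F g c) (hβ : IsVSMax F g βe) {qM qNM : ℝ}
    (hqM : 0 < qM) (h : qM < qNM) {s : ℝ} (hsIcc : s ∈ Icc (0:ℝ) 1)
    (hs : bfun βe qM ≤ s) :
    Vval F g qM + (1 - F s) * ((g qNM - g qM) + s * (qNM - qM)) ≤ Vval F g qNM := by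
  have hqNM0 : (0:ℝ) ≤ qNM := le_trans hqM.le h.le
  have key : ∀ ε > 0, Vval F g qM + (1 - F s) * ((g qNM - g qM) + s * (qNM - qM)) - ε
      < Vval F g qNM := by
    intro ε hε
    have hne : {v | ∃ q : ℝ → ℝ, FeasibleCap qM q ∧ v = virtSurplus F g q}.Nonempty :=
      ⟨virtSurplus F g (fun _ => 0), (fun _ => 0), aux_zero_feasible hqM.le, rfl⟩
    obtain ⟨v, hv, hvlt⟩ := exists_lt_of_lt_csSup hne
      (show Vval F g qM - ε < Vval F g qM by linarith)
    obtain ⟨qa, hqafeas, rfl⟩ := hv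
    obtain ⟨⟨hqameas, hqa0⟩, hqamono, hqacap⟩ := hqafeas
    -- the modified allocation
    have hqtfeas : FeasibleCap qNM (fun θ => if s < θ then qNM else qa θ) := by
      refine ⟨⟨?_, ?_⟩, ?_, ?_⟩
      · exact Measurable.ite (measurableSet_lt measurable_const measurable_id)
          measurable_const hqameas
      · intro θ hθ
        by_cases hc : s < θ
        · simp only [if_pos hc]; exact hqNM0
        · simp only [if_neg hc]; exact hqa0 θ hθ
      · intro x hx y hy hxy
        by_cases hcx : s < x
        · simp only [if_pos hcx, if_pos (lt_of_lt_of_le hcx hxy)]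
          exact le_rfl
        · by_cases hcy : s < y
          · simp only [if_neg hcx, if_pos hcy]
            exact le_trans (hqacap x hx) h.le
          · simp only [if_neg hcx, if_neg hcy]
            exact hqamono hx hy hxy
      · intro θ hθ
        by_cases hc : s < θ
        · simp only [if_pos hc]
          exact le_rfl
        · simp only [if_neg hc]
          exact le_trans (hqacap θ hθ) h.le
    have hintf : IntervalIntegrable (fun θ => (g (qa θ) + phi F θ * qa θ) * deriv F θ)
        MeasureTheory.volume 0 1 :=
      aux_alloc_integrable hM ⟨⟨hqameas, hqa0⟩, hqamono, hqacap⟩ hqM.le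
    have hintft : IntervalIntegrable
        (fun θ => (g ((fun θ => if s < θ then qNM else qa θ) θ)
          + phi F θ * ((fun θ => if s < θ then qNM else qa θ) θ)) * deriv F θ)
        MeasureTheory.volume 0 1 :=
      aux_alloc_integrable hM hqtfeas hqNM0
    have hsub1 : uIcc (0:ℝ) s ⊆ uIcc (0:ℝ) 1 := by
      rw [uIcc_of_le hsIcc.1, uIcc_of_le zero_le_one]
      exact Icc_subset_Icc le_rfl hsIcc.2
    have hsub2 : uIcc s (1:ℝ) ⊆ uIcc (0:ℝ) 1 := by
      rw [uIcc_of_le hsIcc.2, uIcc_of_le zero_le_one]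
      exact Icc_subset_Icc hsIcc.1 le_rfl
    have hcontF2 : ContinuousOn (fun θ => (g qNM + phi F θ * qNM) * deriv F θ) (Icc (0:ℝ) 1) :=
      (continuousOn_const.add ((aux_phi_contOn hM).mul continuousOn_const)).mul
        (aux_D_cont hM).continuousOn
    have hintF2 : IntervalIntegrable (fun θ => (g qNM + phi F θ * qNM) * deriv F θ)
        MeasureTheory.volume s 1 := by
      apply ContinuousOn.intervalIntegrable
      apply hcontF2.mono
      rw [uIcc_of_le hsIcc.2]
      exact Icc_subset_Icc hsIcc.1 le_rfl
    have hcontkey : ContinuousOn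
        (fun θ => ((g qNM - g qM) + (qNM - qM) * phi F θ) * deriv F θ) (Icc (0:ℝ) 1) :=
      (continuousOn_const.add (continuousOn_const.mul (aux_phi_contOn hM))).mul
        (aux_D_cont hM).continuousOn
    have hintkey : IntervalIntegrable
        (fun θ => ((g qNM - g qM) + (qNM - qM) * phi F θ) * deriv F θ)
        MeasureTheory.volume s 1 := by
      apply ContinuousOn.intervalIntegrable
      apply hcontkey.mono
      rw [uIcc_of_le hsIcc.2]
      exact Icc_subset_Icc hsIcc.1 le_rfl
    -- split the integrals
    have hsplita : virtSurplus F g qa =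
        (∫ θ in (0:ℝ)..s, (g (qa θ) + phi F θ * qa θ) * deriv F θ)
        + ∫ θ in s..(1:ℝ), (g (qa θ) + phi F θ * qa θ) * deriv F θ :=
      (intervalIntegral.integral_add_adjacent_intervals
        (hintf.mono_set hsub1) (hintf.mono_set hsub2)).symm
    have hsplitt : virtSurplus F g (fun θ => if s < θ then qNM else qa θ) =
        (∫ θ in (0:ℝ)..s, (g ((fun θ => if s < θ then qNM else qa θ) θ)
          + phi F θ * ((fun θ => if s < θ then qNM else qa θ) θ)) * deriv F θ)
        + ∫ θ in s..(1:ℝ), (g ((fun θ => if s < θ then qNM else qa θ) θ)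
          + phi F θ * ((fun θ => if s < θ then qNM else qa θ) θ)) * deriv F θ :=
      (intervalIntegral.integral_add_adjacent_intervals
        (hintft.mono_set hsub1) (hintft.mono_set hsub2)).symm
    have e1 : (∫ θ in (0:ℝ)..s, (g ((fun θ => if s < θ then qNM else qa θ) θ)
          + phi F θ * ((fun θ => if s < θ then qNM else qa θ) θ)) * deriv F θ)
        = ∫ θ in (0:ℝ)..s, (g (qa θ) + phi F θ * qa θ) * deriv F θ := by
      apply intervalIntegral.integral_congr
      intro θ hθ
      rw [uIcc_of_le hsIcc.1] at hθ
      simp only [if_neg (not_lt.mpr hθ.2)]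
    have e2 : (∫ θ in s..(1:ℝ), (g ((fun θ => if s < θ then qNM else qa θ) θ)
          + phi F θ * ((fun θ => if s < θ then qNM else qa θ) θ)) * deriv F θ)
        = ∫ θ in s..(1:ℝ), (g qNM + phi F θ * qNM) * deriv F θ := by
      rw [intervalIntegral.integral_of_le hsIcc.2, intervalIntegral.integral_of_le hsIcc.2]
      apply MeasureTheory.setIntegral_congr_fun measurableSet_Ioc
      intro θ hθ
      simp only [if_pos hθ.1]
    -- pointwise comparison on (s, 1]
    have hcomp : (∫ θ in s..(1:ℝ), (g (qa θ) + phi F θ * qa θ) * deriv F θ)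
        + ((1 - F s) * ((g qNM - g qM) + s * (qNM - qM)))
        ≤ ∫ θ in s..(1:ℝ), (g qNM + phi F θ * qNM) * deriv F θ := by
      have hkeyint := aux_key_integral hM (g qNM - g qM) (qNM - qM) hsIcc
      rw [← hkeyint]
      rw [← intervalIntegral.integral_add (hintf.mono_set hsub2) hintkey]
      rw [intervalIntegral.integral_of_le hsIcc.2, intervalIntegral.integral_of_le hsIcc.2]
      have hintsum : MeasureTheory.IntegrableOn
          (fun θ => (g (qa θ) + phi F θ * qa θ) * deriv F θ
            + ((g qNM - g qM) + (qNM - qM) * phi F θ) * deriv F θ) (Ioc s 1) := by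
        rw [← intervalIntegrable_iff_integrableOn_Ioc_of_le hsIcc.2]
        exact (hintf.mono_set hsub2).add hintkey
      have hintF2' : MeasureTheory.IntegrableOn
          (fun θ => (g qNM + phi F θ * qNM) * deriv F θ) (Ioc s 1) := by
        rw [← intervalIntegrable_iff_integrableOn_Ioc_of_le hsIcc.2]
        exact hintF2
      apply MeasureTheory.setIntegral_mono_on hintsum hintF2' measurableSet_Ioc
      intro θ hθ
      have hθIcc : θ ∈ Icc (0:ℝ) 1 := ⟨le_trans hsIcc.1 hθ.1.le, hθ.2⟩
      have hφ : -(deriv g qM) ≤ phi F θ :=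
        aux_phi_lb hM hβ hqM hθIcc (lt_of_le_of_lt hs hθ.1)
      have hqaθ := hqa0 θ hθIcc
      have hqacapθ := hqacap θ hθIcc
      have hchord : deriv g qM * (qM - qa θ) ≤ g qM - g (qa θ) := by
        rcases eq_or_lt_of_le hqacapθ with he | hlt3
        · rw [he]; simp
        · exact aux_gd_le_chord hM hqaθ hlt3
      have hDpos := hM.F_density_pos θ hθIcc
      have hp : 0 ≤ (phi F θ + deriv g qM) * (qM - qa θ) :=
        mul_nonneg (by linarith) (by linarith)
      have hmain : (g (qa θ) + phi F θ * qa θ) + ((g qNM - g qM) + (qNM - qM) * phi F θ)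
          ≤ g qNM + phi F θ * qNM := by nlinarith [hp, hchord]
      calc (g (qa θ) + phi F θ * qa θ) * deriv F θ
            + ((g qNM - g qM) + (qNM - qM) * phi F θ) * deriv F θ
          = ((g (qa θ) + phi F θ * qa θ)
            + ((g qNM - g qM) + (qNM - qM) * phi F θ)) * deriv F θ := by ring
        _ ≤ (g qNM + phi F θ * qNM) * deriv F θ :=
            mul_le_mul_of_nonneg_right hmain hDpos.le
    have hVq2 : virtSurplus F g (fun θ => if s < θ then qNM else qa θ) ≤ Vval F g qNM :=
      le_csSup (aux_Vset_bddAbove hM hqNM0)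
        ⟨(fun θ => if s < θ then qNM else qa θ), hqtfeas, rfl⟩
    rw [hsplitt, e1, e2] at hVq2
    rw [hsplita] at hvlt
    linarith
  by_contra hcon
  push_neg at hcon
  have := key (Vval F g qM + (1 - F s) * ((g qNM - g qM) + s * (qNM - qM)) - Vval F g qNM)
    (by linarith)
  linarith

end AuxStmt5

/-- Proposition 6: no screening. If the monopolist does not fully
bunch, i.e. `b(q^M) > 0`, then the non-discriminating monopolist's optimal quality
satisfies `q_N^M < q^M` and `b_N(q_N^M) < b(q^M)`. -/
theorem stmt5 (F g c : ℝ → ℝ) (hM : MainModel F g c)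
    (βe : ℝ → EReal) (hβ : IsVSMax F g βe)
    (qM : ℝ)
    (hqM : 0 ≤ qM ∧
      (1 - F (bfun βe qM)) * (bfun βe qM + deriv g qM) = deriv c qM ∧
      ∀ q : ℝ, 0 ≤ q → Vval F g q - c q ≤ Vval F g qM - c qM)
    (qNM : ℝ)
    (hqNM : 0 ≤ qNM ∧
      (1 - F (bN F g qNM)) * (deriv g qNM + bN F g qNM) = deriv c qNM ∧
      (∀ q : ℝ, 0 ≤ q → VN F g q - c q ≤ VN F g qNM - c qNM) ∧
      ∀ q : ℝ, 0 ≤ q →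
        (∀ q' : ℝ, 0 ≤ q' → VN F g q' - c q' ≤ VN F g q - c q) → q = qNM) :
    0 < bfun βe qM → qNM < qM ∧ bN F g qNM < bfun βe qM := by
  intro hbM
  obtain ⟨hqM0, hFOCM, hoptM⟩ := hqM
  obtain ⟨hqNM0, hFOCN, hoptN, huniq⟩ := hqNM
  have hqMpos : 0 < qM := by
    rcases eq_or_lt_of_le hqM0 with heq | h
    · exfalso
      rw [← heq, aux_bfun_zero hM hβ] at hbM
      exact lt_irrefl 0 hbM
    · exact h
  have hbMIcc : bfun βe qM ∈ Icc (0:ℝ) 1 := aux_bfun_mem_Icc hM hβ qM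
  have hlt : qNM < qM := by
    rcases lt_trichotomy qNM qM with hh | hh | hh
    · exact hh
    · -- FOC case : qNM = qM
      exfalso
      subst hh
      have hbn := aux_bN_mem_Icc hM hqNM0
      have hbnlt : bN F g qNM < bfun βe qNM := by
        rcases eq_or_lt_of_le hbn.1 with hb0 | hb0
        · rw [← hb0]; exact hbM
        · apply aux_lt_bfun hM hβ hqMpos hbn
          have h1 := aux_bN_cond hM hqMpos hb0
          have h2 := aux_gd_lt_avg hM hqMpos
          have h4 : deriv g qNM < g qNM / qNM := (lt_div_iff₀ hqMpos).mpr h2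
          linarith
      have hmono : StrictMonoOn (fun θ => (1 - F θ) * (θ + deriv g qNM))
          (Icc 0 (bfun βe qNM)) := by
        apply strictMonoOn_of_deriv_pos (convex_Icc _ _)
        · exact ((continuous_const.sub (aux_F_diff hM).continuous).mul
            (continuous_id.add continuous_const)).continuousOn
        · intro x hx
          rw [interior_Icc] at hx
          have hxIcc : x ∈ Icc (0:ℝ) 1 := ⟨hx.1.le, hx.2.le.trans hbMIcc.2⟩
          have hD := hM.F_density_pos x hxIcc
          have hφ : phi F x < -(deriv g qNM) := by
            have hmidIcc : (x + bfun βe qNM) / 2 ∈ Icc (0:ℝ) 1 :=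
              ⟨by linarith [hx.1], by linarith [hx.2, hbMIcc.2]⟩
            have h5 := hM.phi_mono hxIcc hmidIcc (by linarith [hx.2])
            have h6 := aux_phi_ub hM hβ hqMpos hmidIcc (by linarith [hx.2])
            linarith
          have hder : HasDerivAt (fun θ => (1 - F θ) * (θ + deriv g qNM))
              (-(deriv F x) * (x + deriv g qNM) + (1 - F x) * 1) x := by
            have h1 : HasDerivAt (fun t => 1 - F t) (-(deriv F x)) x := by
              simpa using ((aux_F_diff hM x).hasDerivAt.const_sub 1)
            have h2 : HasDerivAt (fun t : ℝ => t + deriv g qNM) 1 x :=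
              (hasDerivAt_id x).add_const _
            exact h1.mul h2
          rw [hder.deriv]
          have hkey : -(deriv F x) * (x + deriv g qNM) + (1 - F x) * 1
              = deriv F x * (-(phi F x + deriv g qNM)) := by
            have hD0 : deriv F x ≠ 0 := hD.ne'
            unfold phi
            field_simp
            ring
          rw [hkey]
          exact mul_pos hD (by linarith)
      have hcmp := hmono (Set.mem_Icc.mpr ⟨hbn.1, hbnlt.le⟩)
        (Set.mem_Icc.mpr ⟨hbMIcc.1, le_rfl⟩) hbnlt
      simp only at hcmp
      nlinarith [hcmp, hFOCM, hFOCN]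
    · -- construction case : qM < qNM
      exfalso
      obtain ⟨θ2, hθ2Icc, hVN2, hVNmax⟩ := aux_VN_max hM qNM
      have hVN1 : (1 - F θ2) * (g qM + θ2 * qM) ≤ VN F g qM := aux_VN_ge hM qM hθ2Icc
      have hsIcc : max θ2 (bfun βe qM) ∈ Icc (0:ℝ) 1 :=
        ⟨le_trans hθ2Icc.1 (le_max_left _ _), max_le hθ2Icc.2 hbMIcc.2⟩
      have hgain := aux_V_gain hM hβ hqMpos hh hsIcc (le_max_right _ _)
      have hAB : g qNM - g qM ≤ deriv g qM * (qNM - qM) := aux_chord_le_gd hM hqMpos hh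
      have hBpos : (0:ℝ) < qNM - qM := by linarith
      have hstep1 : (1 - F θ2) * ((g qNM - g qM) + θ2 * (qNM - qM))
          ≤ (1 - F (max θ2 (bfun βe qM)))
            * ((g qNM - g qM) + (max θ2 (bfun βe qM)) * (qNM - qM)) := by
        rcases max_cases θ2 (bfun βe qM) with ⟨he, hc⟩ | ⟨he, hc⟩
        · rw [he]
        · rw [he]
          have hmono : MonotoneOn (fun θ => (1 - F θ) * ((g qNM - g qM) + θ * (qNM - qM)))
              (Icc θ2 (bfun βe qM)) := by
            apply monotoneOn_of_deriv_nonneg (convex_Icc _ _)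
            · exact ((continuous_const.sub (aux_F_diff hM).continuous).mul
                (continuous_const.add (continuous_id.mul continuous_const))).continuousOn
            · have hdiff : Differentiable ℝ
                  (fun θ => (1 - F θ) * ((g qNM - g qM) + θ * (qNM - qM))) :=
                ((differentiable_const _).sub (aux_F_diff hM)).mul
                  ((differentiable_const _).add (differentiable_id.mul_const _))
              exact hdiff.differentiableOn
            · intro x hx
              rw [interior_Icc] at hx
              have hxIcc : x ∈ Icc (0:ℝ) 1 := ⟨le_trans hθ2Icc.1 hx.1.le, hx.2.le.trans hbMIcc.2⟩
              have hφ := aux_phi_ub hM hβ hqMpos hxIcc hx.2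
              have hder : HasDerivAt (fun θ => (1 - F θ) * ((g qNM - g qM) + θ * (qNM - qM)))
                  (-(deriv F x) * ((g qNM - g qM) + x * (qNM - qM))
                    + (1 - F x) * (qNM - qM)) x := by
                have h1 : HasDerivAt (fun t => 1 - F t) (-(deriv F x)) x := by
                  simpa using ((aux_F_diff hM x).hasDerivAt.const_sub 1)
                have h2 : HasDerivAt (fun t : ℝ => (g qNM - g qM) + t * (qNM - qM))
                    (qNM - qM) x := by
                  simpa using ((hasDerivAt_id x).mul_const (qNM - qM)).const_add (g qNM - g qM)
                exact h1.mul h2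
              rw [hder.deriv]
              have hD := hM.F_density_pos x hxIcc
              have hkey : -(deriv F x) * ((g qNM - g qM) + x * (qNM - qM))
                  + (1 - F x) * (qNM - qM)
                  = deriv F x * (-((g qNM - g qM) + phi F x * (qNM - qM))) := by
                have hD0 : deriv F x ≠ 0 := hD.ne'
                unfold phi
                field_simp
                ring
              rw [hkey]
              apply mul_nonneg hD.le
              have hm := mul_le_mul_of_nonneg_right hφ (le_of_lt hBpos)
              linarith [hAB, hm]
          have := hmono (Set.mem_Icc.mpr ⟨le_rfl, hc.le⟩)
            (Set.mem_Icc.mpr ⟨hc.le, le_rfl⟩) hc.le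
          simpa using this
      have hle := hoptN qM hqM0
      have hstrict : VN F g qM - c qM < VN F g qNM - c qNM := by
        rcases eq_or_lt_of_le hle with heqv | hstrict
        · exfalso
          have : qM = qNM := huniq qM hqM0
            (fun q' hq' => le_trans (hoptN q' hq') (le_of_eq heqv.symm))
          exact absurd this (ne_of_lt hh)
        · exact hstrict
      have hVNdiff : VN F g qNM - VN F g qM
          ≤ (1 - F θ2) * ((g qNM - g qM) + θ2 * (qNM - qM)) := by
        nlinarith [hVN1, hVN2]
      have hopt := hoptM qNM hqNM0
      linarith [hgain, hstep1, hVNdiff, hstrict, hopt]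
  refine ⟨hlt, ?_⟩
  rcases eq_or_lt_of_le hqNM0 with h0 | h0
  · rw [← h0, aux_bN_zero hM]
    exact hbM
  · have hbn := aux_bN_mem_Icc hM h0.le
    rcases eq_or_lt_of_le hbn.1 with hb0 | hb0
    · rw [← hb0]
      exact hbM
    · apply aux_lt_bfun hM hβ hqMpos hbn
      have h1 : phi F (bN F g qNM) ≤ -(g qNM / qNM) := aux_bN_cond hM h0 hb0
      have h2 : deriv g qNM * qNM < g qNM := aux_gd_lt_avg hM h0
      have h3 : deriv g qM < deriv g qNM :=
        aux_gd_anti hM (mem_Ioi.mpr h0) (mem_Ioi.mpr hqMpos) hlt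
      have h4 : deriv g qNM < g qNM / qNM := (lt_div_iff₀ h0).mpr h2
      linarith
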